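/- Let n ≥ 1, let M : ℂ → ℂ^{n×n} be differentiable at λ₁ ∈ ℂ, let v₁, u₁, c ∈ ℂⁿ with c^H v₁ = 1, u₁^H M(λ₁) = 0 (u₁ is a left eigenvector), and u₁^H M'(λ₁) v₁ ≠ 0, and set K := (v₁ u₁^H)/(u₁^H M'(λ₁) v₁). Suppose there are ε > 0 and a function R₁ : ℂ → ℂ^{n×n} continuous at λ₁ such that for all σ with 0 < |σ − λ₁| < ε the matrix M(σ) is invertible and M(σ)⁻¹ = (σ − λ₁)⁻¹ K + R₁(σ). With w_σ^H := c^H M(σ)⁻¹, the limit as σ → λ₁ (σ ≠ λ₁) of (σ − λ₁)⁻¹ (w_σ^H M'(λ₁) v₁)⁻¹ · M'(λ₁)v₁ · (w_σ^H M(λ₁)) exists and equals M'(λ₁) v₁ · (c^H R₁(λ₁) M(λ₁)). -/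

import Mathlib

open Matrix Filter

/-- (key limit in eq. (4.2)) Under the Keldysh decomposition
`M(σ)⁻¹ = (σ − λ₁)⁻¹ K + R₁(σ)` near a simple eigentriplet `(λ₁, v₁, u₁)`, with
`w_σᴴ = cᴴ M(σ)⁻¹`, the limit as `σ → λ₁`, `σ ≠ λ₁`, of
`(σ − λ₁)⁻¹ (w_σᴴ M'(λ₁) v₁)⁻¹ M'(λ₁)v₁ (w_σᴴ M(λ₁))`
exists and equals `M'(λ₁)v₁ · (cᴴ R₁(λ₁) M(λ₁))`. -/
theorem keldysh_limit (n : ℕ) (hn : 1 ≤ n)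
    (M : ℂ → Matrix (Fin n) (Fin n) ℂ) (lam1 : ℂ)
    (Mp : Matrix (Fin n) (Fin n) ℂ)
    (hMp : ∀ a b, HasDerivAt (fun t : ℂ => M t a b) (Mp a b) lam1)
    (v1 u1 c : Fin n → ℂ)
    (hc : star c ⬝ᵥ v1 = 1)
    (hleft : star u1 ᵥ* M lam1 = 0)
    (hd : star u1 ⬝ᵥ (Mp *ᵥ v1) ≠ 0)
    (K : Matrix (Fin n) (Fin n) ℂ)
    (hK : K = (star u1 ⬝ᵥ (Mp *ᵥ v1))⁻¹ • vecMulVec v1 (star u1))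
    (ε : ℝ) (hε : 0 < ε)
    (R1 : ℂ → Matrix (Fin n) (Fin n) ℂ)
    (hR1 : ContinuousAt R1 lam1)
    (hKeldysh : ∀ σ : ℂ, σ ≠ lam1 → ‖σ - lam1‖ < ε →
      IsUnit (M σ) ∧ (M σ)⁻¹ = (σ - lam1)⁻¹ • K + R1 σ) :
    Tendsto
      (fun σ : ℂ => (σ - lam1)⁻¹ •
        (((star c ᵥ* (M σ)⁻¹) ⬝ᵥ (Mp *ᵥ v1))⁻¹ •
          vecMulVec (Mp *ᵥ v1) ((star c ᵥ* (M σ)⁻¹) ᵥ* M lam1)))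
      (nhdsWithin lam1 {lam1}ᶜ)
      (nhds (vecMulVec (Mp *ᵥ v1) (star c ᵥ* (R1 lam1 * M lam1)))) := by
  set a : Fin n → ℂ := Mp *ᵥ v1 with ha
  set d : ℂ := star u1 ⬝ᵥ a with hdd
  -- the simplified function
  set g : ℂ → Matrix (Fin n) (Fin n) ℂ := fun σ =>
    (1 + (σ - lam1) * ((star c ᵥ* R1 σ) ⬝ᵥ a))⁻¹ •
      vecMulVec a (star c ᵥ* (R1 σ * M lam1)) with hg
  have hcK : star c ᵥ* K = d⁻¹ • star u1 := by
    funext j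
    simp only [hK, vecMul, dotProduct, vecMulVec, Matrix.smul_apply, Matrix.of_apply,
      smul_eq_mul, Pi.smul_apply]
    calc ∑ i, star c i * (d⁻¹ * (v1 i * star u1 j))
        = (∑ i, star c i * v1 i) * (d⁻¹ * star u1 j) := by
          rw [Finset.sum_mul]; exact Finset.sum_congr rfl fun i _ => by ring
      _ = d⁻¹ * star u1 j := by
          have : ∑ i, star c i * v1 i = 1 := hc
          rw [this, one_mul]
  have key : ∀ σ : ℂ, σ ≠ lam1 → ‖σ - lam1‖ < ε →
      (σ - lam1)⁻¹ • (((star c ᵥ* (M σ)⁻¹) ⬝ᵥ a)⁻¹ •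
        vecMulVec a ((star c ᵥ* (M σ)⁻¹) ᵥ* M lam1)) = g σ := by
    intro σ hσ hσε
    have hinv := (hKeldysh σ hσ hσε).2
    have hsub : σ - lam1 ≠ 0 := sub_ne_zero.2 hσ
    have hsA : ∀ (s : ℂ) (A : Matrix (Fin n) (Fin n) ℂ) (x : Fin n → ℂ),
        x ᵥ* (s • A) = s • (x ᵥ* A) := by
      intro s A x
      funext j
      simp only [vecMul, dotProduct, Matrix.smul_apply, smul_eq_mul, Pi.smul_apply,
        Finset.mul_sum]
      exact Finset.sum_congr rfl fun i _ => by ring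
    have hw : star c ᵥ* (M σ)⁻¹ = ((σ - lam1)⁻¹ * d⁻¹) • star u1 + star c ᵥ* R1 σ := by
      rw [hinv, vecMul_add, hsA, hcK, smul_smul]
    have hwa : (star c ᵥ* (M σ)⁻¹) ⬝ᵥ a = (σ - lam1)⁻¹ + (star c ᵥ* R1 σ) ⬝ᵥ a := by
      rw [hw, add_dotProduct, smul_dotProduct, smul_eq_mul, ← hdd, mul_assoc,
        inv_mul_cancel₀ hd, mul_one]
    have hwM : (star c ᵥ* (M σ)⁻¹) ᵥ* M lam1 = star c ᵥ* (R1 σ * M lam1) := by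
      rw [hw, add_vecMul, smul_vecMul, hleft, smul_zero, zero_add, vecMul_vecMul]
    rw [hwa, hwM, smul_smul]
    simp only [hg]
    congr 1
    rw [← mul_inv]
    congr 1
    field_simp
  have hev : (fun σ : ℂ => (σ - lam1)⁻¹ •
        (((star c ᵥ* (M σ)⁻¹) ⬝ᵥ a)⁻¹ •
          vecMulVec a ((star c ᵥ* (M σ)⁻¹) ᵥ* M lam1))) =ᶠ[nhdsWithin lam1 {lam1}ᶜ] g := by
    have hball : ∀ᶠ σ in nhdsWithin lam1 {lam1}ᶜ, ‖σ - lam1‖ < ε := by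
      apply eventually_nhdsWithin_of_eventually_nhds
      have := Metric.ball_mem_nhds lam1 hε
      filter_upwards [this] with σ hσ
      simpa [Metric.mem_ball, Complex.dist_eq] using hσ
    filter_upwards [hball, self_mem_nhdsWithin] with σ h1 h2
    exact key σ h2 h1
  refine Tendsto.congr' hev.symm ?_
  -- now prove Tendsto g
  have hscal : ContinuousAt (fun σ : ℂ => (star c ᵥ* R1 σ) ⬝ᵥ a) lam1 := by
    have hc2 : Continuous (fun A : Matrix (Fin n) (Fin n) ℂ => (star c ᵥ* A) ⬝ᵥ a) := by
      simp only [vecMul, dotProduct]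
      apply continuous_finset_sum
      intro j _
      apply Continuous.mul ?_ continuous_const
      apply continuous_finset_sum
      intro i _
      exact continuous_const.mul ((continuous_apply j).comp (continuous_apply i))
    exact hc2.continuousAt.comp hR1
  have h1 : Tendsto (fun σ : ℂ => (1 + (σ - lam1) * ((star c ᵥ* R1 σ) ⬝ᵥ a))⁻¹)
      (nhdsWithin lam1 {lam1}ᶜ) (nhds 1) := by
    have hbase : ContinuousAt (fun σ : ℂ => 1 + (σ - lam1) * ((star c ᵥ* R1 σ) ⬝ᵥ a)) lam1 := by
      exact continuousAt_const.add (((continuousAt_id.sub continuousAt_const)).mul hscal)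
    have hval : (1 : ℂ) + (lam1 - lam1) * ((star c ᵥ* R1 lam1) ⬝ᵥ a) = 1 := by
      simp
    have := (hbase.inv₀ (by rw [hval]; exact one_ne_zero)).tendsto
    simp only [Pi.inv_apply, hval, inv_one] at this
    exact this.mono_left nhdsWithin_le_nhds
  have h2 : Tendsto (fun σ : ℂ => vecMulVec a (star c ᵥ* (R1 σ * M lam1)))
      (nhdsWithin lam1 {lam1}ᶜ) (nhds (vecMulVec a (star c ᵥ* (R1 lam1 * M lam1)))) := by
    have hc3 : Continuous (fun A : Matrix (Fin n) (Fin n) ℂ =>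
        vecMulVec a (star c ᵥ* (A * M lam1))) := by
      apply continuous_matrix
      intro i j
      simp only [vecMulVec, Matrix.of_apply, vecMul, dotProduct, Matrix.mul_apply]
      apply Continuous.mul continuous_const
      apply continuous_finset_sum
      intro k _
      apply Continuous.mul continuous_const
      apply continuous_finset_sum
      intro l _
      exact ((Continuous.matrix_elem continuous_id k l).mul continuous_const)
    exact ((hc3.continuousAt.comp hR1).tendsto).mono_left nhdsWithin_le_nhds
  have := h1.smul h2
  rw [one_smul] at this
  exact this
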